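/- For a quasi-optimal method the quasi-optimality constant equals the operator norm of the extended approximation operator: if P : V → X (range in S) is bounded with P u = u for all u ∈ V ∩ S, and S ≠ X, then the smallest constant C with ‖v − P v‖ ≤ C · dist(v,S) for all v ∈ V satisfies Cqopt = ‖id_X − P̄‖ = ‖P̄‖, where P̄ : X → X is the unique bounded linear projection of X onto S extending P. -/

import Mathlib

open ContinuousLinearMap Metric

/-- Pure real arithmetic core of Kato's lemma. -/
lemma kato_quad_aux (p a b g : ℝ) (hp1 : 1 ≤ p) (ha0 : 0 ≤ a) (hb0 : 0 ≤ b)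
    (key : ∀ t : ℝ, 0 ≤ ((p^2 - 1) * a^2) * (t * t) + (2 * p^2 * g) * t + p^2 * b^2) :
    b^2 ≤ p^2 * (a^2 + 2 * g + b^2) := by
  have hdisc := discrim_le_zero key
  rw [discrim] at hdisc
  have hp2 : (0:ℝ) < p^2 := by nlinarith
  have hgsq : p^2 * g^2 ≤ (p^2 - 1) * a^2 * b^2 := by nlinarith [hdisc, hp2, mul_pos hp2 hp2]
  set q := Real.sqrt (p^2 - 1) with hq
  have hq0 : 0 ≤ q := Real.sqrt_nonneg _
  have hq2 : q^2 = p^2 - 1 := Real.sq_sqrt (by nlinarith)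
  have hgsq' : p^2 * g^2 ≤ q^2 * (a^2 * b^2) := by rw [hq2]; nlinarith [hgsq]
  have hgq : -(q * a * b) ≤ p * g := by
    nlinarith [hgsq', mul_nonneg (mul_nonneg hq0 ha0) hb0]
  have hq2b : q^2 * b^2 = (p^2 - 1) * b^2 := by rw [hq2]
  nlinarith [sq_nonneg (p * a - q * b), hq2b,
    mul_le_mul_of_nonneg_left hgq (by linarith : (0:ℝ) ≤ 2 * p)]

/-- Kato's lemma half: for a nonzero idempotent on a real inner product space,
`‖I - P‖ ≤ ‖P‖`. -/
lemma kato_half {X : Type*} [NormedAddCommGroup X] [InnerProductSpace ℝ X]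
    (P : X →L[ℝ] X) (hP : ∀ x, P (P x) = P x) (hne : P ≠ 0) :
    ‖ContinuousLinearMap.id ℝ X - P‖ ≤ ‖P‖ := by
  have hp0 : 0 ≤ ‖P‖ := norm_nonneg _
  -- ‖P‖ ≥ 1
  have hp1 : 1 ≤ ‖P‖ := by
    obtain ⟨y, hy⟩ : ∃ y, P y ≠ 0 := by
      by_contra h
      push_neg at h
      exact hne (by ext x; simp [h x])
    have h1 : ‖P (P y)‖ ≤ ‖P‖ * ‖P y‖ := P.le_opNorm _
    rw [hP y] at h1
    have : 0 < ‖P y‖ := norm_pos_iff.mpr hy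
    nlinarith
  refine opNorm_le_bound _ hp0 fun x => ?_
  have hPm : P (P x) = P x := hP x
  have hPn : P (x - P x) = 0 := by rw [map_sub, hP x, sub_self]
  have key : ∀ t : ℝ, 0 ≤ ((‖P‖^2 - 1) * ‖P x‖^2) * (t * t)
      + (2 * ‖P‖^2 * (inner ℝ (x - P x) (P x) : ℝ)) * t + ‖P‖^2 * ‖x - P x‖^2 := by
    intro t
    have h1 : ‖P ((x - P x) + t • P x)‖ ≤ ‖P‖ * ‖(x - P x) + t • P x‖ := P.le_opNorm _
    have h2 : P ((x - P x) + t • P x) = t • P x := by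
      rw [map_add, map_smul, hPn, hPm, zero_add]
    rw [h2] at h1
    have h3 : ‖(x - P x) + t • P x‖^2
        = ‖x - P x‖^2 + 2 * (t * (inner ℝ (x - P x) (P x) : ℝ)) + t^2 * ‖P x‖^2 := by
      rw [norm_add_sq_real, real_inner_smul_right, norm_smul]
      simp [mul_pow, sq_abs]
    have h4 : ‖t • P x‖ = |t| * ‖P x‖ := by rw [norm_smul]; simp
    have h5 : (|t| * ‖P x‖) * (|t| * ‖P x‖)
        ≤ (‖P‖ * ‖(x - P x) + t • P x‖) * (‖P‖ * ‖(x - P x) + t • P x‖) := by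
      rw [← h4]
      exact mul_self_le_mul_self (norm_nonneg _) h1
    have h6 : t^2 * ‖P x‖^2 ≤ ‖P‖^2 * ‖(x - P x) + t • P x‖^2 := by
      nlinarith [sq_abs t, sq_nonneg (|t| * ‖P x‖)]
    rw [h3] at h6
    nlinarith
  have hfinal := kato_quad_aux ‖P‖ ‖P x‖ ‖x - P x‖ (inner ℝ (x - P x) (P x) : ℝ)
    hp1 (norm_nonneg _) (norm_nonneg _) key
  have hxnorm : ‖x‖^2 = ‖P x‖^2 + 2 * (inner ℝ (x - P x) (P x) : ℝ) + ‖x - P x‖^2 := by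
    have hx : x = P x + (x - P x) := by abel
    calc ‖x‖^2 = ‖P x + (x - P x)‖^2 := by rw [← hx]
    _ = ‖P x‖^2 + 2 * (inner ℝ (x - P x) (P x) : ℝ) + ‖x - P x‖^2 := by
        rw [norm_add_sq_real, real_inner_comm]
  rw [← hxnorm] at hfinal
  have hQx : (ContinuousLinearMap.id ℝ X - P) x = x - P x := by simp
  rw [hQx]
  nlinarith [norm_nonneg x, norm_nonneg (x - P x), mul_nonneg hp0 (norm_nonneg x)]



/-- For a quasi-optimal method the quasi-optimality constant equals the operator norm
of the extended approximation operator: if `P : V → X` (range in `S`) is bounded with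
`P u = u` for all `u ∈ V ∩ S`, and `S ≠ X`, then the smallest constant `C` with
`‖v − P v‖ ≤ C · dist(v,S)` for all `v ∈ V` is `‖id − P̄‖ = ‖P̄‖`, where `P̄ : X → X`
is the (unique) bounded linear projection of `X` onto `S` extending `P`. -/
theorem quasiOptimality_constant_eq_norm_extended
    {X : Type*} [NormedAddCommGroup X] [InnerProductSpace ℝ X] [CompleteSpace X]
    (V S : Submodule ℝ X) [CompleteSpace V] [FiniteDimensional ℝ S]
    (hSne : S ≠ ⊥) (hStop : S ≠ ⊤) (hsum : V ⊔ S = ⊤)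
    (P : V →ₗ[ℝ] X) (hrange : ∀ v : V, P v ∈ S)
    (hbdd : ∃ C : ℝ, ∀ v : V, ‖P v‖ ≤ C * ‖(v : X)‖)
    (hcons : ∀ u : V, (u : X) ∈ S → P u = (u : X))
    (Pbar : X →L[ℝ] X)
    (hproj : ∀ x : X, Pbar (Pbar x) = Pbar x)
    (hrangebar : Set.range Pbar = (S : Set X))
    (hext : ∀ v : V, Pbar v = P v) :
    IsLeast {C : ℝ | ∀ v : V, ‖(v : X) - P v‖ ≤ C * Metric.infDist (v : X) (S : Set X)}
        ‖ContinuousLinearMap.id ℝ X - Pbar‖ ∧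
      ‖ContinuousLinearMap.id ℝ X - Pbar‖ = ‖Pbar‖ := by
  set Q : X →L[ℝ] X := ContinuousLinearMap.id ℝ X - Pbar with hQdef
  -- Pbar fixes S
  have hPbarS : ∀ s ∈ S, Pbar s = s := by
    intro s hs
    obtain ⟨y, hy⟩ : s ∈ Set.range Pbar := hrangebar ▸ hs
    rw [← hy, hproj]
  have hmemS : ∀ x : X, Pbar x ∈ S := by
    intro x
    have : Pbar x ∈ Set.range Pbar := ⟨x, rfl⟩
    rwa [hrangebar] at this
  -- Pbar ≠ 0
  have hPne0 : Pbar ≠ 0 := by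
    obtain ⟨s, hsS, hs0⟩ := Submodule.exists_mem_ne_zero_of_ne_bot hSne
    intro h
    exact hs0 (by rw [← hPbarS s hsS, h]; simp)
  -- there is a point outside S
  obtain ⟨x₀, hx₀⟩ : ∃ x₀ : X, x₀ ∉ S := by
    by_contra h
    push_neg at h
    exact hStop (Submodule.eq_top_iff'.mpr h)
  -- Q ≠ 0
  have hQne0 : Q ≠ 0 := by
    intro h
    have h1 : Q x₀ = 0 := by rw [h]; rfl
    have h2 : Q x₀ = x₀ - Pbar x₀ := by simp [hQdef]
    have : x₀ = Pbar x₀ := by rw [h2] at h1; linear_combination (norm := abel) h1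
    exact hx₀ (this ▸ hmemS x₀)
  -- Q is idempotent
  have hQQ : ∀ x : X, Q (Q x) = Q x := by
    intro x
    simp only [hQdef, ContinuousLinearMap.sub_apply, ContinuousLinearMap.id_apply, map_sub,
      hproj]
    abel
  have hIQ : ContinuousLinearMap.id ℝ X - Q = Pbar := by
    ext x; simp [hQdef]
  -- the norm equality via Kato's lemma
  have heq : ‖Q‖ = ‖Pbar‖ := by
    have h1 : ‖Q‖ ≤ ‖Pbar‖ := kato_half Pbar hproj hPne0
    have h2 : ‖Pbar‖ ≤ ‖Q‖ := by
      have := kato_half Q hQQ hQne0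
      rwa [hIQ] at this
    linarith
  haveI : Nonempty (S : Set X) := ⟨⟨0, S.zero_mem⟩⟩
  have hSclosed : IsClosed (S : Set X) := S.closed_of_finiteDimensional
  -- decomposition of any x
  have hdecomp : ∀ x : X, ∃ v ∈ V, ∃ s ∈ S, v + s = x := by
    intro x
    have : x ∈ V ⊔ S := by rw [hsum]; trivial
    exact Submodule.mem_sup.mp this
  -- membership
  have hmem : ∀ v : V, ‖(v : X) - P v‖ ≤ ‖Q‖ * Metric.infDist (v : X) (S : Set X) := by
    intro v
    have hQv : (v : X) - P v = Q (v : X) := by simp [hQdef, hext v]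
    rw [hQv, Metric.infDist_eq_iInf, Real.mul_iInf_of_nonneg (norm_nonneg Q)]
    refine le_ciInf fun ⟨s, hs⟩ => ?_
    have h1 : Q ((v : X) - s) = Q (v : X) := by
      simp only [hQdef, ContinuousLinearMap.sub_apply, ContinuousLinearMap.id_apply, map_sub,
        hPbarS s hs]
      abel
    calc ‖Q (v : X)‖ = ‖Q ((v : X) - s)‖ := by rw [h1]
    _ ≤ ‖Q‖ * ‖(v : X) - s‖ := Q.le_opNorm _
    _ = ‖Q‖ * dist (v : X) s := by rw [dist_eq_norm]
  refine ⟨⟨hmem, ?_⟩, heq⟩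
  -- lower bound
  intro C hC
  -- first: C ≥ 0
  obtain ⟨v₀, hv₀V, s₀, hs₀S, hvs₀⟩ := hdecomp x₀
  have hv₀S : v₀ ∉ S := fun h => hx₀ (hvs₀ ▸ S.add_mem h hs₀S)
  have hd₀ : 0 < Metric.infDist v₀ (S : Set X) := by
    rw [← (hSclosed.notMem_iff_infDist_pos ⟨0, S.zero_mem⟩)]
    exact hv₀S
  have hC0 : 0 ≤ C := by
    have h1 := hC ⟨v₀, hv₀V⟩
    have h2 : (0:ℝ) ≤ ‖((⟨v₀, hv₀V⟩ : V) : X) - P ⟨v₀, hv₀V⟩‖ := norm_nonneg _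
    have h3 : Metric.infDist ((⟨v₀, hv₀V⟩ : V) : X) (S : Set X) = Metric.infDist v₀ (S : Set X) :=
      rfl
    nlinarith [h1, h2, hd₀, h3]
  -- operator norm bound
  refine ContinuousLinearMap.opNorm_le_bound _ hC0 fun x => ?_
  obtain ⟨v, hvV, s, hsS, hvs⟩ := hdecomp x
  have hQx : Q x = ((⟨v, hvV⟩ : V) : X) - P ⟨v, hvV⟩ := by
    have hPbx : Pbar x = P ⟨v, hvV⟩ + s := by
      rw [← hvs, map_add, hPbarS s hsS, hext ⟨v, hvV⟩]
    have h0 : Q x = x - Pbar x := by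
      simp [hQdef]
    rw [h0, hPbx, ← hvs]
    abel
  have hdle : Metric.infDist ((⟨v, hvV⟩ : V) : X) (S : Set X) ≤ ‖x‖ := by
    have hns : -s ∈ S := S.neg_mem hsS
    calc Metric.infDist v (S : Set X) ≤ dist v (-s) := Metric.infDist_le_dist_of_mem hns
    _ = ‖v + s‖ := by rw [dist_eq_norm]; congr 1; abel
    _ = ‖x‖ := by rw [hvs]
  calc ‖Q x‖ = ‖((⟨v, hvV⟩ : V) : X) - P ⟨v, hvV⟩‖ := by rw [hQx]
  _ ≤ C * Metric.infDist ((⟨v, hvV⟩ : V) : X) (S : Set X) := hC _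
  _ ≤ C * ‖x‖ := mul_le_mul_of_nonneg_left hdle hC0
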